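/- Let V = ℝ^{km} with k ≥ 2, m > 2, standard dual basis e^1,...,e^{km}, and let ω = e^{1...m} + e^{(m+1)...(2m)} + ... + e^{((k-1)m+1)...(km)} ∈ Λ^m V*. Then the forms ω_i = e^{((i-1)m+1)...(im)} are, up to permutation, the unique decomposable m-forms satisfying ω = ω_1 + ... + ω_k. -/
import Mathlib


/-- The `m`-form `φ¹ ∧ … ∧ φᵐ` (wedge of `m` covectors), evaluated on `m`
vectors, written as a determinant.  An `m`-form is *decomposable* iff it is of
this shape. -/
noncomputable def detForm {m N : ℕ} (φ : Fin m → ((Fin N → ℝ) →ₗ[ℝ] ℝ))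
    (v : Fin m → Fin N → ℝ) : ℝ :=
  Matrix.det (Matrix.of fun a b : Fin m => φ a (v b))

/-- The standard block form `ωᵢ = e^{((i-1)m+1)} ∧ … ∧ e^{(im)}` on `ℝ^{km}`
(0-indexed: the wedge of the coordinate functionals of the `i`-th block of `m`
consecutive coordinates), evaluated on `m` vectors. -/
noncomputable def blockForm (k m : ℕ) (i : Fin k)
    (v : Fin m → Fin (k * m) → ℝ) : ℝ :=
  Matrix.det (Matrix.of fun a b : Fin m =>
    v b ⟨(i : ℕ) * m + (a : ℕ), by
      have h1 := i.isLt
      have h2 := a.isLt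
      calc (i : ℕ) * m + (a : ℕ) < (i : ℕ) * m + m := by omega
        _ = ((i : ℕ) + 1) * m := by ring
        _ ≤ k * m := Nat.mul_le_mul_right m h1⟩)

namespace Stmt4

variable {k m : ℕ}

/-- index of the `a`-th coordinate of block `j` -/
def bIdx (k m : ℕ) (j : Fin k) (a : Fin m) : Fin (k * m) :=
  ⟨(j : ℕ) * m + (a : ℕ), by
    have h1 := j.isLt
    have h2 := a.isLt
    calc (j : ℕ) * m + (a : ℕ) < (j : ℕ) * m + m := by omega
      _ = ((j : ℕ) + 1) * m := by ring
      _ ≤ k * m := Nat.mul_le_mul_right m h1⟩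

lemma bIdx_inj {j j' : Fin k} {a a' : Fin m} (h : bIdx k m j a = bIdx k m j' a') :
    j = j' ∧ a = a' := by
  have hv : (j : ℕ) * m + (a : ℕ) = (j' : ℕ) * m + (a' : ℕ) := congrArg Fin.val h
  have ha := a.isLt
  have ha' := a'.isLt
  have hj : (j : ℕ) = (j' : ℕ) := by
    rcases lt_trichotomy (j : ℕ) (j' : ℕ) with hlt | heq | hgt
    · exfalso
      have : ((j : ℕ) + 1) * m ≤ (j' : ℕ) * m := Nat.mul_le_mul_right m hlt
      nlinarith
    · exact heq
    · exfalso
      have : ((j' : ℕ) + 1) * m ≤ (j : ℕ) * m := Nat.mul_le_mul_right m hgt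
      nlinarith
  refine ⟨Fin.ext hj, Fin.ext ?_⟩
  have : (j : ℕ) * m = (j' : ℕ) * m := by rw [hj]
  omega

/-- `t` is in block `j` -/
def inBlock (k m : ℕ) (j : Fin k) (t : Fin (k * m)) : Prop :=
  (j : ℕ) * m ≤ (t : ℕ) ∧ (t : ℕ) < (j : ℕ) * m + m

lemma bIdx_inBlock (j : Fin k) (a : Fin m) : inBlock k m j (bIdx k m j a) := by
  constructor
  · simp [bIdx]
  · simp only [bIdx]
    have := a.isLt
    omega

lemma exists_block (hm : 0 < m) (t : Fin (k * m)) : ∃ j a, bIdx k m j a = t := by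
  have htlt := t.isLt
  have hj : (t : ℕ) / m < k := by
    rw [Nat.div_lt_iff_lt_mul hm]
    omega
  refine ⟨⟨(t : ℕ) / m, hj⟩, ⟨(t : ℕ) % m, Nat.mod_lt _ hm⟩, ?_⟩
  apply Fin.ext
  simp only [bIdx]
  rw [Nat.mul_comm]
  exact Nat.div_add_mod _ _

lemma inBlock_of_bIdx_eq {j j' : Fin k} {a : Fin m} (h : inBlock k m j' (bIdx k m j a)) :
    j = j' := by
  rcases h with ⟨h1, h2⟩
  simp only [bIdx] at h1 h2
  have ha := a.isLt
  apply Fin.ext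
  rcases lt_trichotomy (j : ℕ) (j' : ℕ) with hlt | heq | hgt
  · exfalso
    have : ((j : ℕ) + 1) * m ≤ (j' : ℕ) * m := Nat.mul_le_mul_right m hlt
    nlinarith
  · exact heq
  · exfalso
    have : ((j' : ℕ) + 1) * m ≤ (j : ℕ) * m := Nat.mul_le_mul_right m hgt
    nlinarith

/-- projection onto block `j` -/
noncomputable def proj (k m : ℕ) (j : Fin k) : (Fin (k * m) → ℝ) →ₗ[ℝ] (Fin m → ℝ) :=
  LinearMap.pi fun a => LinearMap.proj (bIdx k m j a)

@[simp] lemma proj_apply (j : Fin k) (v : Fin (k * m) → ℝ) (a : Fin m) :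
    proj k m j v a = v (bIdx k m j a) := rfl

/-- determinant with prescribed rows -/
noncomputable def D (m : ℕ) : (Fin m → ℝ) [⋀^Fin m]→ₗ[ℝ] ℝ := Matrix.detRowAlternating

lemma D_apply (u : Fin m → Fin m → ℝ) : D m u = Matrix.det (Matrix.of u) := rfl

lemma detForm_eq {φ : Fin m → ((Fin (k * m) → ℝ) →ₗ[ℝ] ℝ)} (v : Fin m → Fin (k * m) → ℝ) :
    detForm φ v = D m (fun b a => φ a (v b)) := by
  rw [D_apply, detForm, ← Matrix.det_transpose]
  rfl

lemma blockForm_eq (j : Fin k) (v : Fin m → Fin (k * m) → ℝ) :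
    blockForm k m j v = D m (fun b => proj k m j (v b)) := by
  rw [D_apply, blockForm, ← Matrix.det_transpose]
  rfl

lemma D_single : D m (fun b => Pi.single b (1 : ℝ)) = 1 := by
  rw [D_apply]
  have : (Matrix.of fun b a => Pi.single b (1 : ℝ) a) = (1 : Matrix (Fin m) (Fin m) ℝ) := by
    ext b a
    simp [Matrix.one_apply, Pi.single_apply, eq_comm]
  rw [this, Matrix.det_one]

lemma single_eq_smul (t : Fin (k * m)) (c : ℝ) :
    (Pi.single t c : Fin (k * m) → ℝ) = c • (Pi.single t (1 : ℝ) : Fin (k * m) → ℝ) := by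
  funext u
  simp only [Pi.single_apply, Pi.smul_apply, smul_eq_mul]
  split <;> simp

/-- coefficient expansion in a "basis" given by nonzero determinant -/
lemma exists_coef {Y : Fin m → Fin m → ℝ} (hY : D m Y ≠ 0) (x : Fin m → ℝ) :
    ∃ coef : Fin m → ℝ, (∀ a, x a = ∑ b, coef b * Y b a) ∧
      ∀ b, D m (Function.update Y b x) = coef b * D m Y := by
  set M : Matrix (Fin m) (Fin m) ℝ := Matrix.of Y with hM
  have hdet : IsUnit M.det := by
    rw [isUnit_iff_ne_zero]
    exact hY
  refine ⟨Matrix.vecMul x M⁻¹, ?_, ?_⟩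
  · have hx : Matrix.vecMul (Matrix.vecMul x M⁻¹) M = x := by
      rw [Matrix.vecMul_vecMul, Matrix.nonsing_inv_mul _ hdet, Matrix.vecMul_one]
    intro a
    conv_lhs => rw [← hx]
    simp [Matrix.vecMul, dotProduct, hM]
  · intro b
    set coef := Matrix.vecMul x M⁻¹ with hcoef
    have hx : x = ∑ b', coef b' • Y b' := by
      funext a
      have hx2 : Matrix.vecMul coef M = x := by
        rw [hcoef, Matrix.vecMul_vecMul, Matrix.nonsing_inv_mul _ hdet, Matrix.vecMul_one]
      conv_lhs => rw [← hx2]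
      simp [Matrix.vecMul, dotProduct, hM]
    rw [hx, (D m).map_update_sum]
    rw [Finset.sum_eq_single b]
    · rw [(D m).map_update_smul, Function.update_eq_self, smul_eq_mul]
    · intro b' _ hb'
      rw [(D m).map_update_smul]
      have : Function.update Y b (Y b') b = Function.update Y b (Y b') b' := by
        rw [Function.update_self, Function.update_of_ne hb']
      rw [(D m).map_eq_zero_of_eq _ this (by exact fun h => hb' h.symm)]
      simp
    · intro h
      exact absurd (Finset.mem_univ b) h

lemma D_update_single (b0 : Fin m) (x : Fin m → ℝ) :
    D m (Function.update (fun b => Pi.single b (1 : ℝ)) b0 x) = x b0 := by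
  obtain ⟨coef, hcoef, hupd⟩ := exists_coef (Y := fun b => Pi.single b (1 : ℝ))
    (by rw [D_single]; norm_num) x
  rw [hupd b0, D_single, mul_one]
  have := hcoef b0
  rw [this]
  rw [Finset.sum_eq_single b0]
  · simp
  · intro b _ hb
    simp [Pi.single_apply, hb]
  · intro h
    exact absurd (Finset.mem_univ b0) h


lemma comp_update {α β γ : Type*} [DecidableEq α] (f : β → γ) (g : α → β) (i : α) (x : β) :
    (fun b => f (Function.update g i x b)) = Function.update (fun b => f (g b)) i (f x) := by
  funext b
  rcases eq_or_ne b i with h | h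
  · subst h; simp
  · simp [Function.update_of_ne h]

lemma proj_e_self (j : Fin k) (a : Fin m) :
    proj k m j (Pi.single (bIdx k m j a) (1 : ℝ)) = Pi.single a (1 : ℝ) := by
  funext a'
  rw [proj_apply]
  simp only [Pi.single_apply]
  by_cases h : a' = a
  · subst h; simp
  · rw [if_neg, if_neg h]
    intro hc
    exact h (bIdx_inj hc).2

lemma proj_e_ne {l j : Fin k} (h : l ≠ j) (a : Fin m) :
    proj k m l (Pi.single (bIdx k m j a) (1 : ℝ)) = 0 := by
  funext a'
  rw [proj_apply]
  simp only [Pi.single_apply, Pi.zero_apply]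
  rw [if_neg]
  intro hc
  exact h (bIdx_inj hc).1

lemma exists_ne_fin (hm : 2 ≤ m) (b0 : Fin m) : ∃ b1, b1 ≠ b0 := by
  have : 1 < Fintype.card (Fin m) := by simp; omega
  exact Fintype.exists_ne_of_one_lt_card this b0

lemma exists_ne_ne (hm : 3 ≤ m) (b0 b1 : Fin m) : ∃ b, b ≠ b0 ∧ b ≠ b1 := by
  by_contra h
  push_neg at h
  have hsub : (Finset.univ : Finset (Fin m)) ⊆ {b0, b1} := by
    intro b _
    rcases eq_or_ne b b0 with hb | hb
    · simp [hb]
    · simp [h b hb]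
  have hcard := Finset.card_le_card hsub
  have h2 : ({b0, b1} : Finset (Fin m)).card ≤ 2 :=
    le_trans (Finset.card_insert_le _ _) (by simp)
  simp only [Finset.card_univ, Fintype.card_fin] at hcard
  omega

section Main

variable (L : Fin k → ((Fin (k * m) → ℝ) →ₗ[ℝ] (Fin m → ℝ)))
variable (H : ∀ w : Fin m → Fin (k * m) → ℝ,
    ∑ i, D m (fun b => L i (w b)) = ∑ j, D m (fun b => proj k m j (w b)))

include H

lemma key_E1 (hm : 2 ≤ m) (i0 : Fin k) (v : Fin (k * m) → ℝ)
    (hv : ∀ i, i ≠ i0 → L i v = 0) (j : Fin k) (b0 : Fin m) :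
    D m (Function.update (fun b => L i0 (Pi.single (bIdx k m j b) (1 : ℝ))) b0 (L i0 v)) =
      v (bIdx k m j b0) := by
  set w : Fin m → Fin (k * m) → ℝ :=
    Function.update (fun b => Pi.single (bIdx k m j b) (1 : ℝ)) b0 v with hw
  have hH := H w
  have hcomp : ∀ f : (Fin (k * m) → ℝ) →ₗ[ℝ] (Fin m → ℝ),
      (fun b => f (w b)) = Function.update (fun b => f (Pi.single (bIdx k m j b) (1 : ℝ))) b0 (f v) := by
    intro f
    rw [hw]
    exact comp_update f _ b0 v
  rw [Finset.sum_eq_single i0, Finset.sum_eq_single j] at hH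
  · have heq : (fun b => proj k m j (Pi.single (bIdx k m j b) (1 : ℝ))) =
        (fun b => Pi.single b (1 : ℝ)) := by
      funext b
      exact proj_e_self j b
    rw [← hcomp (L i0), hH, hcomp (proj k m j), heq, D_update_single]
    rfl
  · intro l _ hl
    obtain ⟨b1, hb1⟩ := exists_ne_fin hm b0
    refine (D m).map_coord_zero b1 ?_
    show proj k m l (w b1) = 0
    rw [hw, Function.update_of_ne hb1]
    exact proj_e_ne hl b1
  · intro h
    exact absurd (Finset.mem_univ j) h
  · intro i _ hi
    refine (D m).map_coord_zero b0 ?_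
    show L i (w b0) = 0
    rw [hw, Function.update_self]
    exact hv i hi
  · intro h
    exact absurd (Finset.mem_univ i0) h

lemma key_E2 (hm : 3 ≤ m) (i0 : Fin k) (v : Fin (k * m) → ℝ)
    (hv : ∀ i, i ≠ i0 → L i v = 0) {j0 j1 : Fin k} (hj : j0 ≠ j1)
    {b0 b1 : Fin m} (hb : b0 ≠ b1) (c : Fin m) :
    D m (Function.update (Function.update
      (fun b => L i0 (Pi.single (bIdx k m j1 b) (1 : ℝ))) b1 (L i0 (Pi.single (bIdx k m j0 c) (1 : ℝ)))) b0 (L i0 v)) = 0 := by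
  set w : Fin m → Fin (k * m) → ℝ :=
    Function.update (Function.update
      (fun b => Pi.single (bIdx k m j1 b) (1 : ℝ)) b1 (Pi.single (bIdx k m j0 c) (1 : ℝ))) b0 v with hw
  have hH := H w
  have hcomp : ∀ f : (Fin (k * m) → ℝ) →ₗ[ℝ] (Fin m → ℝ),
      (fun b => f (w b)) = Function.update (Function.update
        (fun b => f (Pi.single (bIdx k m j1 b) (1 : ℝ))) b1 (f (Pi.single (bIdx k m j0 c) (1 : ℝ)))) b0 (f v) := by
    intro f
    rw [hw, comp_update f _ b0 v, comp_update f _ b1 _]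
  have hRHS : ∀ l : Fin k, D m (fun b => proj k m l (w b)) = 0 := by
    intro l
    rcases eq_or_ne l j1 with hl | hl
    · refine (D m).map_coord_zero b1 ?_
      show proj k m l (w b1) = 0
      rw [hw, Function.update_of_ne (Ne.symm hb), Function.update_self, hl]
      exact proj_e_ne (Ne.symm hj) c
    · obtain ⟨b, hbb0, hbb1⟩ := exists_ne_ne hm b0 b1
      refine (D m).map_coord_zero b ?_
      show proj k m l (w b) = 0
      rw [hw, Function.update_of_ne hbb0, Function.update_of_ne hbb1]
      exact proj_e_ne hl b
  rw [Finset.sum_eq_single i0] at hH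
  · rw [← hcomp, hH]
    exact Finset.sum_eq_zero fun l _ => hRHS l
  · intro i _ hi
    refine (D m).map_coord_zero b0 ?_
    show L i (w b0) = 0
    rw [hw, Function.update_self]
    exact hv i hi
  · intro h
    exact absurd (Finset.mem_univ i0) h


lemma core (hm : 3 ≤ m) (i0 : Fin k) (v : Fin (k * m) → ℝ)
    (hv : ∀ i, i ≠ i0 → L i v = 0) {j0 j1 : Fin k} (hj : j0 ≠ j1) (a0 a1 : Fin m) :
    v (bIdx k m j0 a0) = 0 ∨ v (bIdx k m j1 a1) = 0 := by
  by_contra h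
  push_neg at h
  obtain ⟨hp, hq⟩ := h
  set y : Fin m → Fin m → ℝ := fun b => L i0 (Pi.single (bIdx k m j1 b) (1 : ℝ)) with hy
  set x : Fin m → Fin m → ℝ := fun c => L i0 (Pi.single (bIdx k m j0 c) (1 : ℝ)) with hxdef
  set z : Fin m → ℝ := L i0 v with hz
  set Y : Fin m → Fin m → ℝ := Function.update y a1 z with hYdef
  have hY : D m Y = v (bIdx k m j1 a1) := key_E1 L H (by omega) i0 v hv j1 a1
  have hYne : D m Y ≠ 0 := by rw [hY]; exact hq
  have hX : D m (Function.update x a0 z) = v (bIdx k m j0 a0) :=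
    key_E1 L H (by omega) i0 v hv j0 a0
  have hmix : ∀ b, b ≠ a1 → ∀ c, D m (Function.update Y b (x c)) = 0 := by
    intro b hb c
    have h2 := key_E2 L H hm i0 v hv hj (Ne.symm hb) c
    rwa [Function.update_comm hb] at h2
  obtain ⟨c, hc⟩ := exists_ne_fin (by omega) a0
  obtain ⟨coef, hcf, hupd⟩ := exists_coef hYne (x c)
  have hcoef0 : ∀ b, b ≠ a1 → coef b = 0 := by
    intro b hb
    have h3 := hupd b
    rw [hmix b hb c] at h3
    rcases mul_eq_zero.mp h3.symm with h4 | h4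
    · exact h4
    · exact absurd h4 hYne
  have hxc : x c = coef a1 • z := by
    funext a
    rw [Pi.smul_apply, smul_eq_mul, hcf a, Finset.sum_eq_single a1]
    · congr 1
      rw [hYdef, Function.update_self]
    · intro b _ hb
      rw [hcoef0 b hb, zero_mul]
    · intro hmem
      exact absurd (Finset.mem_univ a1) hmem
  have hg : D m (Function.update x a0 z) = 0 := by
    set g : Fin m → Fin m → ℝ := Function.update x a0 z with hgdef
    have hgc : g c = coef a1 • z := by
      rw [hgdef, Function.update_of_ne hc]
      exact hxc
    have hgg : g = Function.update g c (coef a1 • z) := by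
      rw [← hgc, Function.update_eq_self]
    rw [hgg, (D m).map_update_smul]
    have hzz : (Function.update g c z) c = (Function.update g c z) a0 := by
      rw [Function.update_self, Function.update_of_ne (Ne.symm hc), hgdef,
        Function.update_self]
    rw [(D m).map_eq_zero_of_eq _ hzz hc]
    simp
  rw [hX] at hg
  exact hp hg

end Main

/-- the subspace of vectors supported in block `j` -/
def Vsub (k m : ℕ) (j : Fin k) : Submodule ℝ (Fin (k * m) → ℝ) where
  carrier := {v | ∀ t, ¬ inBlock k m j t → v t = 0}
  add_mem' := by
    intro a b ha hb t ht
    show a t + b t = 0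
    rw [ha t ht, hb t ht, add_zero]
  zero_mem' := fun t _ => rfl
  smul_mem' := by
    intro c a ha t ht
    show c * a t = 0
    rw [ha t ht, mul_zero]

lemma mem_Vsub {j : Fin k} {v : Fin (k * m) → ℝ} :
    v ∈ Vsub k m j ↔ ∀ t, ¬ inBlock k m j t → v t = 0 := Iff.rfl

lemma finrank_Vsub (hm : 0 < m) (j : Fin k) :
    Module.finrank ℝ (Vsub k m j) ≤ m := by
  have hinj : Function.Injective ((proj k m j).comp (Vsub k m j).subtype) := by
    intro u v huv
    apply Subtype.ext
    funext t
    rcases Classical.em (inBlock k m j t) with ht | ht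
    · obtain ⟨l, a, hla⟩ := exists_block hm t
      have hlj : l = j := by
        apply inBlock_of_bIdx_eq (j' := j)
        rw [hla]
        exact ht
      subst hlj
      rw [← hla]
      have := congrFun huv a
      simpa using this
    · rw [u.2 t ht, v.2 t ht]
  calc Module.finrank ℝ (Vsub k m j) ≤ Module.finrank ℝ (Fin m → ℝ) :=
        LinearMap.finrank_le_finrank_of_injective hinj
    _ = m := by simp

section Main2

variable (L : Fin k → ((Fin (k * m) → ℝ) →ₗ[ℝ] (Fin m → ℝ)))
variable (H : ∀ w : Fin m → Fin (k * m) → ℝ,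
    ∑ i, D m (fun b => L i (w b)) = ∑ j, D m (fun b => proj k m j (w b)))

include H

lemma blocked (hk : 2 ≤ k) (hm3 : 3 ≤ m) (i0 : Fin k) :
    ∃ j : Fin k, ∀ a : Fin m, ∀ i, i ≠ i0 → L i (Pi.single (bIdx k m j a) (1 : ℝ)) = 0 := by
  classical
  set Φ : (Fin (k * m) → ℝ) →ₗ[ℝ] ({i : Fin k // i ≠ i0} → Fin m → ℝ) :=
    LinearMap.pi (fun i => L i.1) with hΦ
  set Z := LinearMap.ker Φ with hZdef
  have hmemZ : ∀ v, v ∈ Z ↔ ∀ i, i ≠ i0 → L i v = 0 := by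
    intro v
    rw [hZdef, LinearMap.mem_ker]
    constructor
    · intro h i hi
      have := congrFun h ⟨i, hi⟩
      simpa [hΦ] using this
    · intro h
      funext i
      simp [hΦ, h i.1 i.2]
  have hfin : m ≤ Module.finrank ℝ Z := by
    have h1 := LinearMap.finrank_range_add_finrank_ker Φ
    have h2 : Module.finrank ℝ (LinearMap.range Φ) ≤
        Module.finrank ℝ ({i : Fin k // i ≠ i0} → Fin m → ℝ) := Submodule.finrank_le _
    have hcard : Fintype.card {i : Fin k // i ≠ i0} = k - 1 := by
      simp [Fintype.card_subtype_compl]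
    have h3 : Module.finrank ℝ ({i : Fin k // i ≠ i0} → Fin m → ℝ) = (k - 1) * m := by
      have heach : ∀ i : {i : Fin k // i ≠ i0}, Module.finrank ℝ (Fin m → ℝ) = m :=
        fun _ => by simp
      rw [Module.finrank_pi_fintype, Finset.sum_congr rfl (fun i _ => heach i),
        Finset.sum_const, Finset.card_univ, hcard, smul_eq_mul]
    have h4 : Module.finrank ℝ (Fin (k * m) → ℝ) = k * m := by simp
    have h5 : (k - 1) * m + m = k * m := by
      have hkk : k - 1 + 1 = k := by omega
      calc (k - 1) * m + m = ((k - 1) + 1) * m := by ring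
        _ = k * m := by rw [hkk]
    rw [h3] at h2
    rw [h4] at h1
    set A := Module.finrank ℝ (LinearMap.range Φ)
    set B := Module.finrank ℝ Z
    set p := (k - 1) * m
    set q := k * m
    omega
  have hZbot : Z ≠ ⊥ := by
    intro h
    rw [h, finrank_bot] at hfin
    omega
  obtain ⟨v0, hv0Z, hv0⟩ := (Submodule.ne_bot_iff Z).mp hZbot
  obtain ⟨t0, ht0⟩ : ∃ t, v0 t ≠ 0 := by
    by_contra h
    push_neg at h
    exact hv0 (funext h)
  obtain ⟨j0, a0, hba⟩ := exists_block (by omega) t0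
  have hZV : Z ≤ Vsub k m j0 := by
    intro w hw
    rw [mem_Vsub]
    intro t ht
    by_contra hwt
    obtain ⟨l, a, hla⟩ := exists_block (by omega : 0 < m) t
    have hlj : j0 ≠ l := by
      intro hh
      apply ht
      rw [← hla, hh]
      exact bIdx_inBlock l a
    have hv0t : v0 t = 0 := by
      have hd := core L H hm3 i0 v0 ((hmemZ v0).mp hv0Z) hlj a0 a
      rw [hba, hla] at hd
      tauto
    set c : ℝ := (if v0 t0 + w t0 = 0 then 2 else 1 : ℝ) with hcdef
    have hc0 : c ≠ 0 := by
      rw [hcdef]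
      split <;> norm_num
    have huZ : v0 + c • w ∈ Z := Z.add_mem hv0Z (Z.smul_mem c hw)
    have hut0 : (v0 + c • w) t0 ≠ 0 := by
      show v0 t0 + c * w t0 ≠ 0
      rw [hcdef]
      split
      · rename_i hcase
        have hwt0 : w t0 = -v0 t0 := by linarith
        rw [hwt0]
        intro hcon
        apply ht0
        linarith
      · rename_i hcase
        rw [one_mul]
        exact hcase
    have hut : (v0 + c • w) t ≠ 0 := by
      show v0 t + c * w t ≠ 0
      rw [hv0t, zero_add]
      exact mul_ne_zero hc0 hwt
    have hd := core L H hm3 i0 (v0 + c • w) ((hmemZ _).mp huZ) hlj a0 a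
    rw [hba, hla] at hd
    tauto
  have hZeq : Z = Vsub k m j0 :=
    Submodule.eq_of_le_of_finrank_le hZV (le_trans (finrank_Vsub (by omega) j0) hfin)
  refine ⟨j0, fun a i hi => ?_⟩
  have hmem : Pi.single (bIdx k m j0 a) (1 : ℝ) ∈ Vsub k m j0 := by
    rw [mem_Vsub]
    intro t ht
    apply Pi.single_eq_of_ne
    intro hc
    apply ht
    rw [hc]
    exact bIdx_inBlock j0 a
  rw [← hZeq] at hmem
  exact (hmemZ _).mp hmem i hi


lemma jmap_inj_aux (hm3 : 3 ≤ m) {j : Fin k}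
    (hall : ∀ i a, L i (Pi.single (bIdx k m j a) (1 : ℝ)) = 0) : False := by
  have hH := H (fun b => Pi.single (bIdx k m j b) (1 : ℝ))
  have hL : ∀ i : Fin k, D m (fun b => L i (Pi.single (bIdx k m j b) (1 : ℝ))) = 0 := by
    intro i
    exact (D m).map_coord_zero ⟨0, by omega⟩ (hall i _)
  have hR : ∀ l, D m (fun b => proj k m l (Pi.single (bIdx k m j b) (1 : ℝ))) =
      (if l = j then (1 : ℝ) else 0) := by
    intro l
    rcases eq_or_ne l j with rfl | hl
    · rw [if_pos rfl]
      have heq : (fun b => proj k m l (Pi.single (bIdx k m l b) (1 : ℝ))) =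
          (fun b => Pi.single b (1 : ℝ)) := funext (proj_e_self l)
      rw [heq, D_single]
    · rw [if_neg hl]
      exact (D m).map_coord_zero ⟨0, by omega⟩ (proj_e_ne hl _)
  rw [Finset.sum_congr rfl (fun i _ => hL i), Finset.sum_congr rfl (fun l _ => hR l)] at hH
  simp at hH

lemma final (hm3 : 3 ≤ m) (i : Fin k) {j : Fin k}
    (hP : ∀ a, ∀ i', i' ≠ i → L i' (Pi.single (bIdx k m j a) (1 : ℝ)) = 0)
    (v : Fin m → Fin (k * m) → ℝ) :
    D m (fun b => L i (v b)) = D m (fun b => proj k m j (v b)) := by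
  classical
  set x : Fin m → Fin m → ℝ := fun b => L i (Pi.single (bIdx k m j b) (1 : ℝ)) with hx
  have hEa : ∀ w : Fin m → Fin (k * m) → ℝ, ∀ b0 a0,
      w b0 = Pi.single (bIdx k m j a0) (1 : ℝ) →
      D m (fun b => L i (w b)) = ∑ l, D m (fun b => proj k m l (w b)) := by
    intro w b0 a0 hw
    have hH := H w
    rw [Finset.sum_eq_single i] at hH
    · exact hH
    · intro i' _ hi'
      refine (D m).map_coord_zero b0 ?_
      show L i' (w b0) = 0
      rw [hw]
      exact hP a0 i' hi'
    · intro h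
      exact absurd (Finset.mem_univ i) h
  have hDx : D m x = 1 := by
    have h1 := hEa (fun b => Pi.single (bIdx k m j b) (1 : ℝ)) ⟨0, by omega⟩ ⟨0, by omega⟩ rfl
    rw [h1, Finset.sum_eq_single j]
    · have heq : (fun b => proj k m j (Pi.single (bIdx k m j b) (1 : ℝ))) =
          (fun b => Pi.single b (1 : ℝ)) := funext (proj_e_self j)
      rw [heq, D_single]
    · intro l _ hl
      exact (D m).map_coord_zero ⟨0, by omega⟩ (proj_e_ne hl _)
    · intro h
      exact absurd (Finset.mem_univ j) h
  have hDxne : D m x ≠ 0 := by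
    rw [hDx]
    exact one_ne_zero
  have hcols : ∀ t : Fin (k * m), (∀ a, bIdx k m j a ≠ t) →
      L i (Pi.single t (1 : ℝ)) = 0 := by
    intro t hta
    obtain ⟨l, a', hla⟩ := exists_block (by omega : 0 < m) t
    have hlj : j ≠ l := by
      intro h
      exact hta a' (by rw [h]; exact hla)
    obtain ⟨coef, hcf, hupd⟩ := exists_coef hDxne (L i (Pi.single t (1 : ℝ)))
    have hzero : ∀ b0, D m (Function.update x b0 (L i (Pi.single t (1 : ℝ)))) = 0 := by
      intro b0
      obtain ⟨b1, hb1⟩ := exists_ne_fin (by omega) b0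
      set w : Fin m → Fin (k * m) → ℝ :=
        Function.update (fun b => Pi.single (bIdx k m j b) (1 : ℝ)) b0
          (Pi.single t (1 : ℝ)) with hwdef
      have hwb1 : w b1 = Pi.single (bIdx k m j b1) (1 : ℝ) := Function.update_of_ne hb1 _ _
      have h1 := hEa w b1 b1 hwb1
      have hRz : ∀ l', D m (fun b => proj k m l' (w b)) = 0 := by
        intro l'
        rcases eq_or_ne l' j with rfl | hl'
        · refine (D m).map_coord_zero b0 ?_
          show proj k m l' (w b0) = 0
          rw [hwdef, Function.update_self, ← hla]
          exact proj_e_ne hlj a'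
        · refine (D m).map_coord_zero b1 ?_
          show proj k m l' (w b1) = 0
          rw [hwb1]
          exact proj_e_ne hl' b1
      rw [Finset.sum_eq_zero (fun l' _ => hRz l')] at h1
      have hcomp : (fun b => L i (w b)) =
          Function.update x b0 (L i (Pi.single t (1 : ℝ))) := by
        rw [hwdef]
        exact comp_update (L i) _ b0 _
      rw [hcomp] at h1
      exact h1
    have hc0 : ∀ b, coef b = 0 := by
      intro b
      have h2 := hupd b
      rw [hzero b, hDx, mul_one] at h2
      exact h2.symm
    funext a
    rw [hcf a]
    simp [hc0]
  have hLw : ∀ u : Fin (k * m) → ℝ, L i u = ∑ a, u (bIdx k m j a) • x a := by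
    intro u
    have hbi : Function.Injective (bIdx k m j) := by
      intro a a' h
      exact (bIdx_inj h).2
    have hstep : L i u = ∑ t, u t • L i (Pi.single t (1 : ℝ)) := by
      conv_lhs => rw [← Finset.univ_sum_single u]
      rw [map_sum]
      refine Finset.sum_congr rfl fun t _ => ?_
      rw [single_eq_smul, map_smul]
    rw [hstep]
    have hss : ∑ t ∈ Finset.univ.map ⟨bIdx k m j, hbi⟩, u t • L i (Pi.single t (1 : ℝ)) =
        ∑ t, u t • L i (Pi.single t (1 : ℝ)) := by
      refine Finset.sum_subset (Finset.subset_univ _) fun t _ htn => ?_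
      have hta : ∀ a, bIdx k m j a ≠ t := by
        intro a hc
        exact htn (Finset.mem_map.mpr ⟨a, Finset.mem_univ a, hc⟩)
      rw [hcols t hta, smul_zero]
    rw [← hss, Finset.sum_map]
    rfl
  have hmat : (Matrix.of fun b a => L i (v b) a) =
      (Matrix.of fun b a' => proj k m j (v b) a') * (Matrix.of x) := by
    ext b a
    rw [Matrix.mul_apply]
    simp only [Matrix.of_apply]
    rw [hLw (v b)]
    simp [Finset.sum_apply]
  rw [D_apply, D_apply]
  have : (Matrix.of fun b a => L i (v b) a) = Matrix.of (fun b => L i (v b)) := rfl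
  rw [← this, hmat, Matrix.det_mul]
  have hdx : (Matrix.of x).det = 1 := hDx
  rw [hdx, mul_one]

end Main2

end Stmt4

/-- on `V = ℝ^{km}` (`k ≥ 2`, `m > 2`), the block forms
`ωᵢ = e^{((i-1)m+1)…(im)}` are, up to permutation, the unique decomposable
`m`-forms summing to `ω = ω₁ + … + ω_k`. -/
theorem stmt4 (k m : ℕ) (hk : 2 ≤ k) (hm : 2 < m)
    (ωt : Fin k → ((Fin m → Fin (k * m) → ℝ) → ℝ))
    (hdec : ∀ i, ∃ φ : Fin m → ((Fin (k * m) → ℝ) →ₗ[ℝ] ℝ), ωt i = detForm φ)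
    (hsum : ∀ v, ∑ i, ωt i v = ∑ i : Fin k, blockForm k m i v) :
    ∃ e : Equiv.Perm (Fin k), ∀ i, ωt i = blockForm k m (e i) := by
  classical
  choose φ hφ using hdec
  set L : Fin k → ((Fin (k * m) → ℝ) →ₗ[ℝ] (Fin m → ℝ)) :=
    fun i => LinearMap.pi (φ i) with hL
  have hLapp : ∀ (i : Fin k) (w : Fin m → Fin (k * m) → ℝ),
      (fun b => L i (w b)) = (fun b a => φ i a (w b)) := fun i w => rfl
  have H : ∀ w : Fin m → Fin (k * m) → ℝ,
      ∑ i, Stmt4.D m (fun b => L i (w b)) = ∑ j, Stmt4.D m (fun b => Stmt4.proj k m j (w b)) := by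
    intro w
    have h1 := hsum w
    calc ∑ i, Stmt4.D m (fun b => L i (w b)) = ∑ i, ωt i w := by
          refine Finset.sum_congr rfl fun i _ => ?_
          rw [hφ i, Stmt4.detForm_eq, hLapp]
      _ = ∑ j, blockForm k m j w := h1
      _ = ∑ j, Stmt4.D m (fun b => Stmt4.proj k m j (w b)) :=
          Finset.sum_congr rfl fun j _ => Stmt4.blockForm_eq j w
  have hjm : ∀ i0 : Fin k, ∃ j : Fin k, ∀ a : Fin m, ∀ i', i' ≠ i0 →
      L i' (Pi.single (Stmt4.bIdx k m j a) (1 : ℝ)) = 0 :=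
    fun i0 => Stmt4.blocked L H hk (by omega) i0
  choose jm hP using hjm
  have hinj : Function.Injective jm := by
    intro i0 i1 h01
    by_contra hne
    refine Stmt4.jmap_inj_aux L H (by omega) (j := jm i0) fun i a => ?_
    rcases eq_or_ne i i0 with rfl | hi
    · rw [h01]
      exact hP i1 a i hne
    · exact hP i0 a i hi
  refine ⟨Equiv.ofBijective jm (Finite.injective_iff_bijective.mp hinj), fun i => ?_⟩
  funext v
  have hfin := Stmt4.final L H (by omega) i (hP i) v
  rw [hφ i, Stmt4.detForm_eq, ← hLapp i v, hfin, Equiv.ofBijective_apply, ← Stmt4.blockForm_eq]
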